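/- arXiv:1912.10733 — 6 statements merged into one kernel-verified Lean document; each statement's English description precedes it below -/
import Mathlib

section
/- For any x in R₊³ there exists a unique b ≥ 0 solving b = Σᵢ vᵢ mᵢ(b) xᵢ. Moreover this solution b*(x) is positive when x ≠ 0, and b*(0) = 0. -/
/-- Existence and uniqueness of b*(x): for continuous decreasing positive recruitment
    rates mᵢ and positive weights vᵢ, for every nonnegative x ∈ ℝ³ the equation
    b = Σᵢ vᵢ mᵢ(b) xᵢ has a unique nonnegative solution, which is positive iff x ≠ 0. -/
theorem stmt_5 (m1 m2 m3 : ℝ → ℝ)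
    (hc1 : Continuous m1) (hc2 : Continuous m2) (hc3 : Continuous m3)
    (ha1 : AntitoneOn m1 (Set.Ici 0)) (ha2 : AntitoneOn m2 (Set.Ici 0))
    (ha3 : AntitoneOn m3 (Set.Ici 0))
    (hp1 : ∀ b, 0 ≤ b → 0 < m1 b) (hp2 : ∀ b, 0 ≤ b → 0 < m2 b)
    (hp3 : ∀ b, 0 ≤ b → 0 < m3 b)
    (v1 v2 v3 : ℝ) (hv1 : 0 < v1) (hv2 : 0 < v2) (hv3 : 0 < v3)
    (x1 x2 x3 : ℝ) (h1 : 0 ≤ x1) (h2 : 0 ≤ x2) (h3 : 0 ≤ x3) :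
    (∃! b : ℝ, 0 ≤ b ∧ b = v1 * m1 b * x1 + v2 * m2 b * x2 + v3 * m3 b * x3) ∧
    (∀ b : ℝ, 0 ≤ b → b = v1 * m1 b * x1 + v2 * m2 b * x2 + v3 * m3 b * x3 →
      ((¬(x1 = 0 ∧ x2 = 0 ∧ x3 = 0) → 0 < b) ∧ ((x1 = 0 ∧ x2 = 0 ∧ x3 = 0) → b = 0))) := by
  set g : ℝ → ℝ := fun b => v1 * m1 b * x1 + v2 * m2 b * x2 + v3 * m3 b * x3 with hg
  have hg_cont : Continuous g := by fun_prop
  have hg_nonneg : ∀ b, 0 ≤ b → 0 ≤ g b := fun b hb => by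
    have := hp1 b hb; have := hp2 b hb; have := hp3 b hb
    positivity
  have hg_anti : ∀ a b : ℝ, 0 ≤ a → a ≤ b → g b ≤ g a := by
    intro a b ha hab
    have hb : (0:ℝ) ≤ b := le_trans ha hab
    have e1 : m1 b ≤ m1 a := ha1 ha hb hab
    have e2 : m2 b ≤ m2 a := ha2 ha hb hab
    have e3 : m3 b ≤ m3 a := ha3 ha hb hab
    have := (hp1 b hb).le; have := (hp2 b hb).le; have := (hp3 b hb).le
    simp only [hg]
    gcongr
  -- existence
  have hM : 0 ≤ g 0 := hg_nonneg 0 le_rfl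
  have hex : ∃ b : ℝ, 0 ≤ b ∧ b = g b := by
    have hf : ContinuousOn (fun b => b - g b) (Set.Icc 0 (g 0)) :=
      (continuous_id.sub hg_cont).continuousOn
    have h0 : (fun b => b - g b) 0 ≤ 0 := by simp [hg_nonneg 0 le_rfl]
    have hMv : (0:ℝ) ≤ (fun b => b - g b) (g 0) := by
      have := hg_anti 0 (g 0) le_rfl hM
      simp only [sub_nonneg]; linarith
    obtain ⟨b, hbmem, hbeq⟩ := intermediate_value_Icc hM hf ⟨h0, hMv⟩
    simp only [sub_eq_zero] at hbeq
    exact ⟨b, hbmem.1, hbeq⟩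
  obtain ⟨b₀, hb₀, heq₀⟩ := hex
  have huniq : ∀ a b : ℝ, 0 ≤ a → a = g a → 0 ≤ b → b = g b → a = b := by
    intro a b ha hga hb hgb
    rcases le_total a b with h | h
    · have := hg_anti a b ha h; linarith
    · have := hg_anti b a hb h; linarith
  constructor
  · exact ⟨b₀, ⟨hb₀, heq₀⟩, fun c ⟨hc, hgc⟩ => (huniq b₀ c hb₀ heq₀ hc hgc).symm⟩
  · intro b hb hgb
    constructor
    · intro hne
      have hgpos : 0 < v1 * m1 b * x1 + v2 * m2 b * x2 + v3 * m3 b * x3 := by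
        have p1 := hp1 b hb; have p2 := hp2 b hb; have p3 := hp3 b hb
        rcases (not_and_or.mp (fun h => hne ⟨h.1, h.2⟩) : _) with h | h
        · have : 0 < x1 := lt_of_le_of_ne h1 (Ne.symm h)
          have : 0 < v1 * m1 b * x1 := by positivity
          have t2 : 0 ≤ v2 * m2 b * x2 := by positivity
          have t3 : 0 ≤ v3 * m3 b * x3 := by positivity
          linarith
        · rcases not_and_or.mp h with h | h
          · have : 0 < x2 := lt_of_le_of_ne h2 (Ne.symm h)
            have : 0 < v2 * m2 b * x2 := by positivity
            have t1 : 0 ≤ v1 * m1 b * x1 := by positivity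
            have t3 : 0 ≤ v3 * m3 b * x3 := by positivity
            linarith
          · have : 0 < x3 := lt_of_le_of_ne h3 (Ne.symm h)
            have : 0 < v3 * m3 b * x3 := by positivity
            have t1 : 0 ≤ v1 * m1 b * x1 := by positivity
            have t2 : 0 ≤ v2 * m2 b * x2 := by positivity
            linarith
      linarith [hgb, hgpos]
    · rintro ⟨e1, e2, e3⟩
      rw [hgb, e1, e2, e3]; ring
end

section
/- For any fixed nonzero x in R₊³, the map λ ↦ b*(λx) is strictly increasing on [0, ∞). -/
/-- For fixed nonzero nonnegative x ∈ ℝ³, the map λ ↦ b*(λx) is strictly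
    increasing on [0,∞), where b*(y) is the unique nonnegative solution of
    b = Σᵢ vᵢ mᵢ(b) yᵢ. -/
theorem stmt_6 (m1 m2 m3 : ℝ → ℝ)
    (hc1 : Continuous m1) (hc2 : Continuous m2) (hc3 : Continuous m3)
    (ha1 : AntitoneOn m1 (Set.Ici 0)) (ha2 : AntitoneOn m2 (Set.Ici 0))
    (ha3 : AntitoneOn m3 (Set.Ici 0))
    (hp1 : ∀ b, 0 ≤ b → 0 < m1 b) (hp2 : ∀ b, 0 ≤ b → 0 < m2 b)
    (hp3 : ∀ b, 0 ≤ b → 0 < m3 b)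
    (v1 v2 v3 : ℝ) (hv1 : 0 < v1) (hv2 : 0 < v2) (hv3 : 0 < v3)
    (bstar : ℝ → ℝ → ℝ → ℝ)
    (hb : ∀ y1 y2 y3 : ℝ, 0 ≤ y1 → 0 ≤ y2 → 0 ≤ y3 →
      0 ≤ bstar y1 y2 y3 ∧
      bstar y1 y2 y3 = v1 * m1 (bstar y1 y2 y3) * y1 + v2 * m2 (bstar y1 y2 y3) * y2
        + v3 * m3 (bstar y1 y2 y3) * y3)
    (x1 x2 x3 : ℝ) (h1 : 0 ≤ x1) (h2 : 0 ≤ x2) (h3 : 0 ≤ x3)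
    (hne : ¬(x1 = 0 ∧ x2 = 0 ∧ x3 = 0)) :
    StrictMonoOn (fun l : ℝ => bstar (l * x1) (l * x2) (l * x3)) (Set.Ici 0) := by
  intro a ha b hbm hab
  simp only [Set.mem_Ici] at ha hbm
  obtain ⟨hA0, hAeq⟩ := hb (a * x1) (a * x2) (a * x3)
    (mul_nonneg ha h1) (mul_nonneg ha h2) (mul_nonneg ha h3)
  obtain ⟨hB0, hBeq⟩ := hb (b * x1) (b * x2) (b * x3)
    (mul_nonneg hbm h1) (mul_nonneg hbm h2) (mul_nonneg hbm h3)
  show bstar (a * x1) (a * x2) (a * x3) < bstar (b * x1) (b * x2) (b * x3)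
  set A := bstar (a * x1) (a * x2) (a * x3) with hA
  set B := bstar (b * x1) (b * x2) (b * x3) with hBdef
  clear_value A B
  by_contra h
  push_neg at h
  have hm1 : m1 A ≤ m1 B := ha1 (Set.mem_Ici.2 hB0) (Set.mem_Ici.2 hA0) h
  have hm2 : m2 A ≤ m2 B := ha2 (Set.mem_Ici.2 hB0) (Set.mem_Ici.2 hA0) h
  have hm3 : m3 A ≤ m3 B := ha3 (Set.mem_Ici.2 hB0) (Set.mem_Ici.2 hA0) h
  have hp1B := hp1 B hB0
  have hp2B := hp2 B hB0
  have hp3B := hp3 B hB0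
  have t1 : 0 ≤ v1 * m1 B * x1 := mul_nonneg (mul_nonneg hv1.le (hp1B).le) h1
  have t2 : 0 ≤ v2 * m2 B * x2 := mul_nonneg (mul_nonneg hv2.le (hp2B).le) h2
  have t3 : 0 ≤ v3 * m3 B * x3 := mul_nonneg (mul_nonneg hv3.le (hp3B).le) h3
  have hSBpos : 0 < v1 * m1 B * x1 + v2 * m2 B * x2 + v3 * m3 B * x3 := by
    push_neg at hne
    rcases eq_or_lt_of_le h1 with hx1 | hx1
    · rcases eq_or_lt_of_le h2 with hx2 | hx2
      · rcases eq_or_lt_of_le h3 with hx3 | hx3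
        · exact absurd hx3.symm (hne hx1.symm hx2.symm)
        · have := mul_pos (mul_pos hv3 hp3B) hx3; linarith
      · have := mul_pos (mul_pos hv2 hp2B) hx2; linarith
    · have := mul_pos (mul_pos hv1 hp1B) hx1; linarith
  have e1 : v1 * m1 A * (a * x1) ≤ v1 * m1 B * (a * x1) :=
    mul_le_mul_of_nonneg_right (mul_le_mul_of_nonneg_left hm1 hv1.le)
      (mul_nonneg ha h1)
  have e2 : v2 * m2 A * (a * x2) ≤ v2 * m2 B * (a * x2) :=
    mul_le_mul_of_nonneg_right (mul_le_mul_of_nonneg_left hm2 hv2.le)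
      (mul_nonneg ha h2)
  have e3 : v3 * m3 A * (a * x3) ≤ v3 * m3 B * (a * x3) :=
    mul_le_mul_of_nonneg_right (mul_le_mul_of_nonneg_left hm3 hv3.le)
      (mul_nonneg ha h3)
  have hASB : A ≤ a * (v1 * m1 B * x1 + v2 * m2 B * x2 + v3 * m3 B * x3) := by
    rw [hAeq]; nlinarith [e1, e2, e3]
  have hstep : a * (v1 * m1 B * x1 + v2 * m2 B * x2 + v3 * m3 B * x3)
      < b * (v1 * m1 B * x1 + v2 * m2 B * x2 + v3 * m3 B * x3) :=
    mul_lt_mul_of_pos_right hab hSBpos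
  have hBval : B = b * (v1 * m1 B * x1 + v2 * m2 B * x2 + v3 * m3 B * x3) := by
    linear_combination hBeq
  linarith
end

section
/- (Polymorphic trajectories are holomorphic) For a solution x(t) of system (F) with u_A·x(0) ≠ 0 and u_a·x(0) ≠ 0, all three components x₁(t), x₂(t), x₃(t) are strictly positive for all t > 0. -/
open Matrix Filter Topology

noncomputable def uA : Fin 3 → ℝ := ![1, 1/2, 0]
noncomputable def ua : Fin 3 → ℝ := ![0, 1/2, 1]

/-- The heredity map A(y) = ((u_A·y)²/(1·y), 2(u_A·y)(u_a·y)/(1·y), (u_a·y)²/(1·y)). -/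
noncomputable def Amap (y : Fin 3 → ℝ) : Fin 3 → ℝ :=
  ![(uA ⬝ᵥ y) ^ 2 / (∑ i, y i),
    2 * (uA ⬝ᵥ y) * (ua ⬝ᵥ y) / (∑ i, y i),
    (ua ⬝ᵥ y) ^ 2 / (∑ i, y i)]


lemma expAux (f g : ℝ → ℝ) (K T : ℝ)
    (hd : ∀ t ∈ Set.Icc (0:ℝ) T, HasDerivAt f (g t) t)
    (t : ℝ) (ht : t ∈ Set.Icc (0:ℝ) T) :
    HasDerivAt (fun s => f s * Real.exp (K * s))
      ((g t + K * f t) * Real.exp (K * t)) t := by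
  have h1 := (hd t ht).fun_mul (((hasDerivAt_id t).const_mul K).exp)
  simp only [id_eq] at h1
  refine h1.congr_deriv ?_
  ring

lemma gronwall_mono (f g : ℝ → ℝ) (K T : ℝ) (hT : 0 < T)
    (hd : ∀ t ∈ Set.Icc (0:ℝ) T, HasDerivAt f (g t) t)
    (h : ∀ t ∈ Set.Ioo (0:ℝ) T, 0 ≤ g t + K * f t) :
    f 0 ≤ f T * Real.exp (K * T) := by
  have hmono : MonotoneOn (fun s => f s * Real.exp (K * s)) (Set.Icc 0 T) := by
    apply monotoneOn_of_deriv_nonneg (convex_Icc 0 T)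
    · intro t ht
      exact (expAux f g K T hd t ht).continuousAt.continuousWithinAt
    · intro t ht
      rw [interior_Icc] at ht
      exact (expAux f g K T hd t (Set.mem_Icc_of_Ioo ht)).differentiableAt.differentiableWithinAt
    · intro t ht
      rw [interior_Icc] at ht
      rw [(expAux f g K T hd t (Set.mem_Icc_of_Ioo ht)).deriv]
      exact mul_nonneg (h t ht) (Real.exp_pos _).le
  have := hmono (Set.mem_Icc.mpr ⟨le_rfl, hT.le⟩) (Set.mem_Icc.mpr ⟨hT.le, le_rfl⟩) hT.le
  simpa using this

lemma gronwall_strict (f g : ℝ → ℝ) (K T : ℝ) (hT : 0 < T)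
    (hd : ∀ t ∈ Set.Icc (0:ℝ) T, HasDerivAt f (g t) t)
    (h : ∀ t ∈ Set.Ioo (0:ℝ) T, 0 < g t + K * f t) :
    f 0 < f T * Real.exp (K * T) := by
  have hmono : StrictMonoOn (fun s => f s * Real.exp (K * s)) (Set.Icc 0 T) := by
    apply strictMonoOn_of_deriv_pos (convex_Icc 0 T)
    · intro t ht
      exact (expAux f g K T hd t ht).continuousAt.continuousWithinAt
    · intro t ht
      rw [interior_Icc] at ht
      rw [(expAux f g K T hd t (Set.mem_Icc_of_Ioo ht)).deriv]
      exact mul_pos (h t ht) (Real.exp_pos _)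
  have := hmono (Set.mem_Icc.mpr ⟨le_rfl, hT.le⟩) (Set.mem_Icc.mpr ⟨hT.le, le_rfl⟩) hT
  simpa using this

/-- Polymorphic trajectories of system (F): ẋ = A(M(x)x) − μ(w·x)x are
    "holomorphic": if both alleles are present initially, then all three
    genotypes are present (strictly positive) for all positive times. -/
theorem stmt_10
    (m : Fin 3 → ℝ → ℝ) (μ : Fin 3 → ℝ → ℝ) (w : Fin 3 → ℝ)
    (bstar : (Fin 3 → ℝ) → ℝ)
    (hm_cont : ∀ i, Continuous (m i))
    (hm_anti : ∀ i, AntitoneOn (m i) (Set.Ici 0))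
    (hm_pos : ∀ i b, 0 ≤ b → 0 < m i b)
    (hμ_cont : ∀ i, Continuous (μ i))
    (hμ_mono : ∀ i, MonotoneOn (μ i) (Set.Ici 0))
    (hμ_nn : ∀ i z, 0 ≤ z → 0 ≤ μ i z)
    (hw : ∀ i, 0 < w i)
    (hb_nn : ∀ y, 0 ≤ bstar y)
    (x : ℝ → Fin 3 → ℝ)
    (hx_nn : ∀ t, 0 ≤ t → ∀ i, 0 ≤ x t i)
    (hode : ∀ t, 0 ≤ t → ∀ i,
      HasDerivAt (fun s => x s i)
        (Amap (fun j => m j (bstar (x t)) * x t j) i - μ i (w ⬝ᵥ x t) * x t i) t)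
    (hA0 : uA ⬝ᵥ x 0 ≠ 0) (ha0 : ua ⬝ᵥ x 0 ≠ 0) :
    ∀ t, 0 < t → ∀ i, 0 < x t i := by
  -- explicit dot products
  have huA : ∀ v : Fin 3 → ℝ, uA ⬝ᵥ v = v 0 + v 1 / 2 := by
    intro v; simp [uA, dotProduct, Fin.sum_univ_three]; ring
  have hua : ∀ v : Fin 3 → ℝ, ua ⬝ᵥ v = v 1 / 2 + v 2 := by
    intro v; simp [ua, dotProduct, Fin.sum_univ_three]; ring
  have hsum : ∀ v : Fin 3 → ℝ, ∑ i, v i = v 0 + v 1 + v 2 := fun v => Fin.sum_univ_three v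
  -- continuity facts
  have hxc : ∀ s : ℝ, 0 ≤ s → ∀ i, ContinuousAt (fun r => x r i) s :=
    fun s hs i => (hode s hs i).continuousAt
  have hwc : ∀ s : ℝ, 0 ≤ s → ContinuousAt (fun r => w ⬝ᵥ x r) s := by
    intro s hs
    have he : (fun r => w ⬝ᵥ x r) = fun r => w 0 * x r 0 + w 1 * x r 1 + w 2 * x r 2 := by
      funext r; simp [dotProduct, Fin.sum_univ_three]
    rw [he]
    exact ((continuousAt_const.mul (hxc s hs 0)).add
      (continuousAt_const.mul (hxc s hs 1))).add (continuousAt_const.mul (hxc s hs 2))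
  -- a uniform bound for the death rates on [0, T]
  have hK : ∀ T : ℝ, 0 < T → ∃ K : ℝ, ∀ s ∈ Set.Icc (0:ℝ) T, ∀ i, μ i (w ⬝ᵥ x s) ≤ K := by
    intro T hT
    have hc : ∀ i : Fin 3, ContinuousOn (fun s => μ i (w ⬝ᵥ x s)) (Set.Icc 0 T) :=
      fun i s hs => ((hμ_cont i).continuousAt.comp (hwc s hs.1)).continuousWithinAt
    obtain ⟨K0, h0⟩ := isCompact_Icc.exists_bound_of_continuousOn (hc 0)
    obtain ⟨K1, h1⟩ := isCompact_Icc.exists_bound_of_continuousOn (hc 1)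
    obtain ⟨K2, h2⟩ := isCompact_Icc.exists_bound_of_continuousOn (hc 2)
    refine ⟨max K0 (max K1 K2), fun s hs i => ?_⟩
    fin_cases i
    · have := h0 s hs; rw [Real.norm_eq_abs] at this
      exact ((le_abs_self _).trans this).trans (le_max_left _ _)
    · have := h1 s hs; rw [Real.norm_eq_abs] at this
      exact ((le_abs_self _).trans this).trans ((le_max_left _ _).trans (le_max_right _ _))
    · have := h2 s hs; rw [Real.norm_eq_abs] at this
      exact ((le_abs_self _).trans this).trans ((le_max_right _ _).trans (le_max_right _ _))
  -- initial positivity of the allele frequencies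
  have hp0 : 0 < x 0 0 + x 0 1 / 2 := by
    rw [huA] at hA0
    have h0 := hx_nn 0 le_rfl 0; have h1 := hx_nn 0 le_rfl 1
    exact lt_of_le_of_ne (by linarith) (Ne.symm hA0)
  have hq0 : 0 < x 0 1 / 2 + x 0 2 := by
    rw [hua] at ha0
    have h1 := hx_nn 0 le_rfl 1; have h2 := hx_nn 0 le_rfl 2
    exact lt_of_le_of_ne (by linarith) (Ne.symm ha0)
  -- nonnegativity of the heredity components (always)
  have hAnn : ∀ s : ℝ, 0 ≤ s → ∀ i, 0 ≤ Amap (fun j => m j (bstar (x s)) * x s j) i := by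
    intro s hs i
    have hb := hb_nn (x s)
    have hx0 := hx_nn s hs 0; have hx1 := hx_nn s hs 1; have hx2 := hx_nn s hs 2
    have hm0 := (hm_pos 0 _ hb).le; have hm1 := (hm_pos 1 _ hb).le; have hm2 := (hm_pos 2 _ hb).le
    have hP : 0 ≤ uA ⬝ᵥ (fun j => m j (bstar (x s)) * x s j) := by
      rw [huA]
      have := mul_nonneg hm0 hx0; have := mul_nonneg hm1 hx1
      beta_reduce; linarith [mul_nonneg hm0 hx0, mul_nonneg hm1 hx1]
    have hQ : 0 ≤ ua ⬝ᵥ (fun j => m j (bstar (x s)) * x s j) := by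
      rw [hua]
      beta_reduce; linarith [mul_nonneg hm1 hx1, mul_nonneg hm2 hx2]
    have hS : 0 ≤ ∑ j, (fun j => m j (bstar (x s)) * x s j) j := by
      rw [hsum]
      beta_reduce
      linarith [mul_nonneg hm0 hx0, mul_nonneg hm1 hx1, mul_nonneg hm2 hx2]
    fin_cases i
    · simp only [Amap, Matrix.cons_val_zero]
      exact div_nonneg (sq_nonneg _) hS
    · simp only [Amap, Matrix.cons_val_one, Matrix.head_cons]
      exact div_nonneg (mul_nonneg (mul_nonneg (by norm_num) hP) hQ) hS
    · simp only [Amap, Matrix.cons_val_two, Matrix.tail_cons, Matrix.head_cons]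
      exact div_nonneg (sq_nonneg _) hS
  -- allele A remains present
  have hp : ∀ s : ℝ, 0 ≤ s → 0 < x s 0 + x s 1 / 2 := by
    intro s hs
    rcases eq_or_lt_of_le hs with h | h
    · rw [← h]; exact hp0
    · obtain ⟨K, hKb⟩ := hK s h
      have key := gronwall_mono (fun r => x r 0 + x r 1 / 2)
        (fun r => (Amap (fun j => m j (bstar (x r)) * x r j) 0 - μ 0 (w ⬝ᵥ x r) * x r 0) +
          (Amap (fun j => m j (bstar (x r)) * x r j) 1 - μ 1 (w ⬝ᵥ x r) * x r 1) / 2)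
        K s h
        (fun t ht => (hode t ht.1 0).add ((hode t ht.1 1).div_const 2))
        (by
          intro t ht
          have hA0' := hAnn t ht.1.le 0
          have hA1' := hAnn t ht.1.le 1
          have hx0 := hx_nn t ht.1.le 0; have hx1 := hx_nn t ht.1.le 1
          have hc0 := hKb t ⟨ht.1.le, ht.2.le⟩ 0
          have hc1 := hKb t ⟨ht.1.le, ht.2.le⟩ 1
          beta_reduce
          nlinarith [mul_le_mul_of_nonneg_right hc0 hx0, mul_le_mul_of_nonneg_right hc1 hx1])
      nlinarith [Real.exp_pos (K * s), hp0, key]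
  -- allele a remains present
  have hq : ∀ s : ℝ, 0 ≤ s → 0 < x s 1 / 2 + x s 2 := by
    intro s hs
    rcases eq_or_lt_of_le hs with h | h
    · rw [← h]; exact hq0
    · obtain ⟨K, hKb⟩ := hK s h
      have key := gronwall_mono (fun r => x r 1 / 2 + x r 2)
        (fun r => (Amap (fun j => m j (bstar (x r)) * x r j) 1 - μ 1 (w ⬝ᵥ x r) * x r 1) / 2 +
          (Amap (fun j => m j (bstar (x r)) * x r j) 2 - μ 2 (w ⬝ᵥ x r) * x r 2))
        K s h
        (fun t ht => ((hode t ht.1 1).div_const 2).add (hode t ht.1 2))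
        (by
          intro t ht
          have hA1' := hAnn t ht.1.le 1
          have hA2' := hAnn t ht.1.le 2
          have hx1 := hx_nn t ht.1.le 1; have hx2 := hx_nn t ht.1.le 2
          have hc1 := hKb t ⟨ht.1.le, ht.2.le⟩ 1
          have hc2 := hKb t ⟨ht.1.le, ht.2.le⟩ 2
          beta_reduce
          nlinarith [mul_le_mul_of_nonneg_right hc1 hx1, mul_le_mul_of_nonneg_right hc2 hx2])
      nlinarith [Real.exp_pos (K * s), hq0, key]
  -- strict positivity of heredity components for s ≥ 0
  have hApos : ∀ s : ℝ, 0 ≤ s → ∀ i, 0 < Amap (fun j => m j (bstar (x s)) * x s j) i := by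
    intro s hs i
    have hb := hb_nn (x s)
    have hx0 := hx_nn s hs 0; have hx1 := hx_nn s hs 1; have hx2 := hx_nn s hs 2
    have hm0 := hm_pos 0 _ hb; have hm1 := hm_pos 1 _ hb; have hm2 := hm_pos 2 _ hb
    have hor1 : 0 < x s 0 ∨ 0 < x s 1 := by
      by_contra hcon; push_neg at hcon
      have := hp s hs; linarith [hcon.1, hcon.2]
    have hor2 : 0 < x s 1 ∨ 0 < x s 2 := by
      by_contra hcon; push_neg at hcon
      have := hq s hs; linarith [hcon.1, hcon.2]
    have hP : 0 < uA ⬝ᵥ (fun j => m j (bstar (x s)) * x s j) := by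
      rw [huA]; beta_reduce
      rcases hor1 with h | h
      · nlinarith [mul_pos hm0 h, mul_nonneg hm1.le hx1]
      · nlinarith [mul_pos hm1 h, mul_nonneg hm0.le hx0]
    have hQ : 0 < ua ⬝ᵥ (fun j => m j (bstar (x s)) * x s j) := by
      rw [hua]; beta_reduce
      rcases hor2 with h | h
      · nlinarith [mul_pos hm1 h, mul_nonneg hm2.le hx2]
      · nlinarith [mul_pos hm2 h, mul_nonneg hm1.le hx1]
    have hS : 0 < ∑ j, (fun j => m j (bstar (x s)) * x s j) j := by
      rw [hsum]; beta_reduce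
      rcases hor1 with h | h
      · nlinarith [mul_pos hm0 h, mul_nonneg hm1.le hx1, mul_nonneg hm2.le hx2]
      · nlinarith [mul_pos hm1 h, mul_nonneg hm0.le hx0, mul_nonneg hm2.le hx2]
    fin_cases i
    · simp only [Amap, Matrix.cons_val_zero]
      exact div_pos (pow_pos hP 2) hS
    · simp only [Amap, Matrix.cons_val_one, Matrix.head_cons]
      exact div_pos (by positivity) hS
    · simp only [Amap, Matrix.cons_val_two, Matrix.tail_cons, Matrix.head_cons]
      exact div_pos (pow_pos hQ 2) hS
  -- conclusion
  intro t ht i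
  obtain ⟨K, hKb⟩ := hK t ht
  have key := gronwall_strict (fun r => x r i)
    (fun r => Amap (fun j => m j (bstar (x r)) * x r j) i - μ i (w ⬝ᵥ x r) * x r i)
    K t ht
    (fun s hs => hode s hs.1 i)
    (by
      intro s hs
      have hAi := hApos s hs.1.le i
      have hxi := hx_nn s hs.1.le i
      have hKi := hKb s ⟨hs.1.le, hs.2.le⟩ i
      beta_reduce
      nlinarith [mul_le_mul_of_nonneg_right hKi hxi])
  have h0 := hx_nn 0 le_rfl i
  nlinarith [Real.exp_pos (K * t)]
end

section
/- (Monotone decrease of allelic ratio) Along any polymorphic trajectory of system (F) with m₁ ≥ m₂ ≥ m₃ and μ₁ ≤ μ₂ ≤ μ₃, the ratio (u_a·x(t))/(u_A·x(t)) is nonincreasing in t; its derivative equals (m̃_a(x) − μ̃_a(x) − m̃_A(x) + μ̃_A(x))·(u_a·x)/(u_A·x) ≤ 0. -/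
open Matrix Filter Topology

set_option maxHeartbeats 2000000 in
/-- Monotone decrease of the allelic ratio along polymorphic trajectories of
    system (F): with fitness ordering m₁ ≥ m₂ ≥ m₃ and μ₁ ≤ μ₂ ≤ μ₃, the ratio
    (u_a·x)/(u_A·x) has derivative (m̃_a − μ̃_a − m̃_A + μ̃_A)·(u_a·x)/(u_A·x) ≤ 0
    and is nonincreasing on [0,∞). -/
theorem stmt_14
    (m : Fin 3 → ℝ → ℝ) (μ : Fin 3 → ℝ → ℝ) (w : Fin 3 → ℝ)
    (bstar : (Fin 3 → ℝ) → ℝ)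
    (hm_anti : ∀ i, AntitoneOn (m i) (Set.Ici 0))
    (hm_pos : ∀ i b, 0 ≤ b → 0 < m i b)
    (hm_ord : ∀ b, 0 ≤ b → m 1 b ≤ m 0 b ∧ m 2 b ≤ m 1 b)
    (hμ_mono : ∀ i, MonotoneOn (μ i) (Set.Ici 0))
    (hμ_nn : ∀ i z, 0 ≤ z → 0 ≤ μ i z)
    (hμ_ord : ∀ z, 0 ≤ z → μ 0 z ≤ μ 1 z ∧ μ 1 z ≤ μ 2 z)
    (hw : ∀ i, 0 < w i)
    (hb_nn : ∀ y, 0 ≤ bstar y)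
    (x : ℝ → Fin 3 → ℝ)
    (hx_nn : ∀ t, 0 ≤ t → ∀ i, 0 ≤ x t i)
    (hode : ∀ t, 0 ≤ t → ∀ i,
      HasDerivAt (fun s => x s i)
        (Amap (fun j => m j (bstar (x t)) * x t j) i - μ i (w ⬝ᵥ x t) * x t i) t)
    (hA0 : 0 < uA ⬝ᵥ x 0) (ha0 : 0 < ua ⬝ᵥ x 0)
    (hpos : ∀ t, 0 < t → ∀ i, 0 < x t i) :
    (∀ t, 0 ≤ t →
      HasDerivAt (fun s => (ua ⬝ᵥ x s) / (uA ⬝ᵥ x s))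
        (((ua ⬝ᵥ fun j => m j (bstar (x t)) * x t j) / (ua ⬝ᵥ x t)
            - (ua ⬝ᵥ fun j => μ j (w ⬝ᵥ x t) * x t j) / (ua ⬝ᵥ x t)
            - (uA ⬝ᵥ fun j => m j (bstar (x t)) * x t j) / (uA ⬝ᵥ x t)
            + (uA ⬝ᵥ fun j => μ j (w ⬝ᵥ x t) * x t j) / (uA ⬝ᵥ x t))
          * ((ua ⬝ᵥ x t) / (uA ⬝ᵥ x t))) t ∧
      ((ua ⬝ᵥ fun j => m j (bstar (x t)) * x t j) / (ua ⬝ᵥ x t)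
            - (ua ⬝ᵥ fun j => μ j (w ⬝ᵥ x t) * x t j) / (ua ⬝ᵥ x t)
            - (uA ⬝ᵥ fun j => m j (bstar (x t)) * x t j) / (uA ⬝ᵥ x t)
            + (uA ⬝ᵥ fun j => μ j (w ⬝ᵥ x t) * x t j) / (uA ⬝ᵥ x t))
          * ((ua ⬝ᵥ x t) / (uA ⬝ᵥ x t)) ≤ 0) ∧
    AntitoneOn (fun t => (ua ⬝ᵥ x t) / (uA ⬝ᵥ x t)) (Set.Ici 0) := by
  have hdotA : ∀ t, 0 ≤ t → 0 < uA ⬝ᵥ x t := by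
    intro t ht
    rcases eq_or_lt_of_le ht with h | h
    · rw [← h]; exact hA0
    · have h0 := hpos t h 0
      have h1 := hpos t h 1
      simp only [uA, dotProduct, Fin.sum_univ_three, Matrix.cons_val_zero, Matrix.cons_val_one,
        Matrix.head_cons, Matrix.cons_val_two, Matrix.tail_cons]
      linarith
  have hdota : ∀ t, 0 ≤ t → 0 < ua ⬝ᵥ x t := by
    intro t ht
    rcases eq_or_lt_of_le ht with h | h
    · rw [← h]; exact ha0
    · have h1 := hpos t h 1
      have h2 := hpos t h 2
      simp only [ua, dotProduct, Fin.sum_univ_three, Matrix.cons_val_zero, Matrix.cons_val_one,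
        Matrix.head_cons, Matrix.cons_val_two, Matrix.tail_cons]
      linarith
  have key : ∀ t, 0 ≤ t →
      HasDerivAt (fun s => (ua ⬝ᵥ x s) / (uA ⬝ᵥ x s))
        (((ua ⬝ᵥ fun j => m j (bstar (x t)) * x t j) / (ua ⬝ᵥ x t)
            - (ua ⬝ᵥ fun j => μ j (w ⬝ᵥ x t) * x t j) / (ua ⬝ᵥ x t)
            - (uA ⬝ᵥ fun j => m j (bstar (x t)) * x t j) / (uA ⬝ᵥ x t)
            + (uA ⬝ᵥ fun j => μ j (w ⬝ᵥ x t) * x t j) / (uA ⬝ᵥ x t))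
          * ((ua ⬝ᵥ x t) / (uA ⬝ᵥ x t))) t ∧
      ((ua ⬝ᵥ fun j => m j (bstar (x t)) * x t j) / (ua ⬝ᵥ x t)
            - (ua ⬝ᵥ fun j => μ j (w ⬝ᵥ x t) * x t j) / (ua ⬝ᵥ x t)
            - (uA ⬝ᵥ fun j => m j (bstar (x t)) * x t j) / (uA ⬝ᵥ x t)
            + (uA ⬝ᵥ fun j => μ j (w ⬝ᵥ x t) * x t j) / (uA ⬝ᵥ x t))
          * ((ua ⬝ᵥ x t) / (uA ⬝ᵥ x t)) ≤ 0 := by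
    intro t ht
    have hb : (0:ℝ) ≤ bstar (x t) := hb_nn _
    set b := bstar (x t) with hbdef
    set y : Fin 3 → ℝ := fun j => m j b * x t j with hy
    set z : Fin 3 → ℝ := fun j => μ j (w ⬝ᵥ x t) * x t j with hz
    have hx0 := hx_nn t ht 0
    have hx1 := hx_nn t ht 1
    have hx2 := hx_nn t ht 2
    have hm0 := hm_pos 0 b hb
    have hm1 := hm_pos 1 b hb
    have hm2 := hm_pos 2 b hb
    have hA := hdotA t ht
    have ha := hdota t ht
    have hAe : uA ⬝ᵥ x t = x t 0 + x t 1 / 2 := by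
      simp [uA, dotProduct, Fin.sum_univ_three]; ring
    have hae : ua ⬝ᵥ x t = x t 1 / 2 + x t 2 := by
      simp [ua, dotProduct, Fin.sum_univ_three]; ring
    -- positivity of the sum of y
    have hS : 0 < ∑ i, y i := by
      have hsum : 0 < x t 0 + x t 1 + x t 2 := by
        rw [hAe] at hA; rw [hae] at ha; linarith
      have hone : 0 < x t 0 ∨ 0 < x t 1 ∨ 0 < x t 2 := by
        by_contra h
        push_neg at h
        obtain ⟨h0, h1, h2⟩ := h
        linarith
      rw [Fin.sum_univ_three]
      simp only [hy]
      rcases hone with h | h | h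
      · nlinarith [mul_pos hm0 h, mul_nonneg hm1.le hx1, mul_nonneg hm2.le hx2]
      · nlinarith [mul_nonneg hm0.le hx0, mul_pos hm1 h, mul_nonneg hm2.le hx2]
      · nlinarith [mul_nonneg hm0.le hx0, mul_nonneg hm1.le hx1, mul_pos hm2 h]
    have hSne : (∑ i, y i) ≠ 0 := ne_of_gt hS
    have hS3 : y 0 + y 1 + y 2 ≠ 0 := by rwa [Fin.sum_univ_three] at hSne
    -- conservation: uA and ua dot Amap
    have hAid : uA ⬝ᵥ Amap y = uA ⬝ᵥ y := by
      simp only [Amap, uA, ua, dotProduct, Fin.sum_univ_three, Matrix.cons_val_zero,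
        Matrix.cons_val_one, Matrix.head_cons, Matrix.cons_val_two, Matrix.tail_cons]
      field_simp
      ring
    have haid : ua ⬝ᵥ Amap y = ua ⬝ᵥ y := by
      simp only [Amap, uA, ua, dotProduct, Fin.sum_univ_three, Matrix.cons_val_zero,
        Matrix.cons_val_one, Matrix.head_cons, Matrix.cons_val_two, Matrix.tail_cons]
      field_simp
      ring
    -- derivatives of the dot products
    have hdA : HasDerivAt (fun s => uA ⬝ᵥ x s) (uA ⬝ᵥ y - uA ⬝ᵥ z) t := by
      have H := (((hode t ht 0).const_mul (uA 0)).add ((hode t ht 1).const_mul (uA 1))).add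
        ((hode t ht 2).const_mul (uA 2))
      have hfun : (fun s => uA ⬝ᵥ x s)
          = fun s => uA 0 * x s 0 + uA 1 * x s 1 + uA 2 * x s 2 := by
        funext s; simp [dotProduct, Fin.sum_univ_three]
      rw [hfun]
      convert H using 1
      · rfl
      · rfl
      · rfl
      rw [← hAid]
      simp only [dotProduct, Fin.sum_univ_three, hz]
      ring
    have hda : HasDerivAt (fun s => ua ⬝ᵥ x s) (ua ⬝ᵥ y - ua ⬝ᵥ z) t := by
      have H := (((hode t ht 0).const_mul (ua 0)).add ((hode t ht 1).const_mul (ua 1))).add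
        ((hode t ht 2).const_mul (ua 2))
      have hfun : (fun s => ua ⬝ᵥ x s)
          = fun s => ua 0 * x s 0 + ua 1 * x s 1 + ua 2 * x s 2 := by
        funext s; simp [dotProduct, Fin.sum_univ_three]
      rw [hfun]
      convert H using 1
      · rfl
      · rfl
      · rfl
      rw [← haid]
      simp only [dotProduct, Fin.sum_univ_three, hz]
      ring
    have hdiv := hda.div hdA hA.ne'
    constructor
    · have heq : ∀ (P Q PA QA a A : ℝ), a ≠ 0 → A ≠ 0 →
          (P / a - Q / a - PA / A + QA / A) * (a / A)
            = ((P - Q) * A - a * (PA - QA)) / A ^ 2 := by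
        intros P Q PA QA a A ha' hA'
        field_simp
        ring
      rw [heq _ _ _ _ _ _ ha.ne' hA.ne']
      exact hdiv
    · -- sign of the expression
      have hzw : (0:ℝ) ≤ w ⬝ᵥ x t := by
        simp only [dotProduct, Fin.sum_univ_three]
        have := (hw 0).le; have := (hw 1).le; have := (hw 2).le
        nlinarith [mul_nonneg (hw 0).le hx0, mul_nonneg (hw 1).le hx1, mul_nonneg (hw 2).le hx2]
      obtain ⟨hmo1, hmo2⟩ := hm_ord b hb
      obtain ⟨hμo1, hμo2⟩ := hμ_ord (w ⬝ᵥ x t) hzw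
      have hya : ua ⬝ᵥ y = m 1 b * (x t 1 / 2) + m 2 b * x t 2 := by
        simp [ua, dotProduct, Fin.sum_univ_three, hy]; ring
      have hyA : uA ⬝ᵥ y = m 0 b * x t 0 + m 1 b * (x t 1 / 2) := by
        simp [uA, dotProduct, Fin.sum_univ_three, hy]; ring
      have hza : ua ⬝ᵥ z = μ 1 (w ⬝ᵥ x t) * (x t 1 / 2) + μ 2 (w ⬝ᵥ x t) * x t 2 := by
        simp [ua, dotProduct, Fin.sum_univ_three, hz]; ring
      have hzA : uA ⬝ᵥ z = μ 0 (w ⬝ᵥ x t) * x t 0 + μ 1 (w ⬝ᵥ x t) * (x t 1 / 2) := by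
        simp [uA, dotProduct, Fin.sum_univ_three, hz]; ring
      have h1 : (ua ⬝ᵥ y) / (ua ⬝ᵥ x t) ≤ m 1 b := by
        rw [div_le_iff₀ ha, hya, hae]; nlinarith
      have h2 : m 1 b ≤ (uA ⬝ᵥ y) / (uA ⬝ᵥ x t) := by
        rw [le_div_iff₀ hA, hyA, hAe]; nlinarith
      have h3 : μ 1 (w ⬝ᵥ x t) ≤ (ua ⬝ᵥ z) / (ua ⬝ᵥ x t) := by
        rw [le_div_iff₀ ha, hza, hae]; nlinarith
      have h4 : (uA ⬝ᵥ z) / (uA ⬝ᵥ x t) ≤ μ 1 (w ⬝ᵥ x t) := by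
        rw [div_le_iff₀ hA, hzA, hAe]; nlinarith
      have hE : (ua ⬝ᵥ y) / (ua ⬝ᵥ x t) - (ua ⬝ᵥ z) / (ua ⬝ᵥ x t)
          - (uA ⬝ᵥ y) / (uA ⬝ᵥ x t) + (uA ⬝ᵥ z) / (uA ⬝ᵥ x t) ≤ 0 := by linarith
      have hR : 0 ≤ (ua ⬝ᵥ x t) / (uA ⬝ᵥ x t) := le_of_lt (div_pos ha hA)
      exact mul_nonpos_of_nonpos_of_nonneg hE hR
  refine ⟨fun t ht => key t ht, ?_⟩
  apply antitoneOn_of_deriv_nonpos (convex_Ici 0)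
  · exact fun t ht => ((key t ht).1.continuousAt).continuousWithinAt
  · intro t ht
    rw [interior_Ici] at ht
    exact ((key t ht.le).1.differentiableAt).differentiableWithinAt
  · intro t ht
    rw [interior_Ici] at ht
    rw [(key t ht.le).1.deriv]
    exact (key t ht.le).2
end

section
/- (Hardy-Weinberg invariance of allelic frequencies) In the selectively neutral case, along any nonzero solution x of ẋ = m(b(v·x)) A(x) − μ(w·x) x, the allelic frequencies p_j(t) = (u_j·x(t))/(1·x(t)) are constant in time for j = A, a. -/
open Matrix Filter Topology

lemma sum_Amap (y : Fin 3 → ℝ) (hy : 0 < ∑ i, y i) :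
    ∑ i, Amap y i = ∑ i, y i := by
  have h : ∑ i, y i ≠ 0 := ne_of_gt hy
  simp only [Amap, uA, ua, dotProduct, Fin.sum_univ_three] at *
  simp only [Matrix.cons_val_zero, Matrix.cons_val_one, Matrix.head_cons,
    Matrix.cons_val_two, Matrix.tail_cons]
  field_simp
  ring

lemma uA_Amap (y : Fin 3 → ℝ) (hy : 0 < ∑ i, y i) :
    uA ⬝ᵥ Amap y = uA ⬝ᵥ y := by
  have h : ∑ i, y i ≠ 0 := ne_of_gt hy
  simp only [Amap, uA, ua, dotProduct, Fin.sum_univ_three] at *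
  simp only [Matrix.cons_val_zero, Matrix.cons_val_one, Matrix.head_cons,
    Matrix.cons_val_two, Matrix.tail_cons]
  field_simp
  ring

lemma ua_Amap (y : Fin 3 → ℝ) (hy : 0 < ∑ i, y i) :
    ua ⬝ᵥ Amap y = ua ⬝ᵥ y := by
  have h : ∑ i, y i ≠ 0 := ne_of_gt hy
  simp only [Amap, uA, ua, dotProduct, Fin.sum_univ_three] at *
  simp only [Matrix.cons_val_zero, Matrix.cons_val_one, Matrix.head_cons,
    Matrix.cons_val_two, Matrix.tail_cons]
  field_simp
  ring

lemma freq_const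
    (mhat μhat : ℝ → ℝ)
    (x : ℝ → Fin 3 → ℝ)
    (hx_ne : ∀ t, 0 ≤ t → 0 < ∑ i, x t i)
    (hode : ∀ t, 0 ≤ t → ∀ i,
      HasDerivAt (fun s => x s i) (mhat t * Amap (x t) i - μhat t * x t i) t)
    (u : Fin 3 → ℝ)
    (hu : ∀ y : Fin 3 → ℝ, 0 < ∑ i, y i → u ⬝ᵥ Amap y = u ⬝ᵥ y) :
    ∀ t, 0 ≤ t → (u ⬝ᵥ x t) / (∑ i, x t i) = (u ⬝ᵥ x 0) / (∑ i, x 0 i) := by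
  -- derivative of the numerator
  have hN : ∀ t, 0 ≤ t → HasDerivAt (fun s => u ⬝ᵥ x s)
      ((mhat t - μhat t) * (u ⬝ᵥ x t)) t := by
    intro t ht
    have : HasDerivAt (fun s => ∑ i, u i * x s i)
        (∑ i, u i * (mhat t * Amap (x t) i - μhat t * x t i)) t :=
      HasDerivAt.fun_sum fun i _ => (hode t ht i).const_mul (u i)
    have he : (∑ i, u i * (mhat t * Amap (x t) i - μhat t * x t i))
        = (mhat t - μhat t) * (u ⬝ᵥ x t) := by
      have h1 : u ⬝ᵥ Amap (x t) = u ⬝ᵥ x t := hu _ (hx_ne t ht)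
      have h2 : ∀ i : Fin 3, u i * (mhat t * Amap (x t) i - μhat t * x t i)
          = mhat t * (u i * Amap (x t) i) - μhat t * (u i * x t i) := by
        intro i; ring
      simp only [dotProduct] at h1 ⊢
      rw [Finset.sum_congr rfl (fun i _ => h2 i), Finset.sum_sub_distrib,
        ← Finset.mul_sum, ← Finset.mul_sum, h1]
      ring
    rw [← he]
    simpa [dotProduct] using this
  have hS : ∀ t, 0 ≤ t → HasDerivAt (fun s => ∑ i, x s i)
      ((mhat t - μhat t) * (∑ i, x t i)) t := by
    intro t ht
    have : HasDerivAt (fun s => ∑ i, x s i)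
        (∑ i, (mhat t * Amap (x t) i - μhat t * x t i)) t :=
      HasDerivAt.fun_sum fun i _ => hode t ht i
    have he : (∑ i, (mhat t * Amap (x t) i - μhat t * x t i))
        = (mhat t - μhat t) * (∑ i, x t i) := by
      rw [Finset.sum_sub_distrib, ← Finset.mul_sum, ← Finset.mul_sum,
        sum_Amap _ (hx_ne t ht)]
      ring
    rw [← he]; exact this
  have hf : ∀ t, 0 ≤ t →
      HasDerivAt (fun s => (u ⬝ᵥ x s) / (∑ i, x s i)) 0 t := by
    intro t ht
    have hS0 : (∑ i, x t i) ≠ 0 := ne_of_gt (hx_ne t ht)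
    have : HasDerivAt (fun s => (u ⬝ᵥ x s) / (∑ i, x s i)) _ t := (hN t ht).div (hS t ht) hS0
    convert this using 1
    ring
  intro t ht
  have key := constant_of_has_deriv_right_zero
    (f := fun s => (u ⬝ᵥ x s) / (∑ i, x s i)) (a := 0) (b := t)
    (fun s hs => ((hf s hs.1).continuousAt).continuousWithinAt)
    (fun s hs => ((hf s hs.1).hasDerivWithinAt))
  exact key t ⟨ht, le_refl _⟩

/-- Hardy–Weinberg invariance of allelic frequencies: in the selectively
    neutral system ẋ = m̂(t)A(x) − μ̂(t)x, the allelic frequencies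
    (u_j·x)/(1·x), j = A, a, are constant in time. -/
theorem stmt_15
    (mhat μhat : ℝ → ℝ) (hmc : Continuous mhat) (hμc : Continuous μhat)
    (x : ℝ → Fin 3 → ℝ)
    (hx_nn : ∀ t, 0 ≤ t → ∀ i, 0 ≤ x t i)
    (hx_ne : ∀ t, 0 ≤ t → 0 < ∑ i, x t i)
    (hode : ∀ t, 0 ≤ t → ∀ i,
      HasDerivAt (fun s => x s i) (mhat t * Amap (x t) i - μhat t * x t i) t) :
    ∀ t, 0 ≤ t →
      (uA ⬝ᵥ x t) / (∑ i, x t i) = (uA ⬝ᵥ x 0) / (∑ i, x 0 i) ∧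
      (ua ⬝ᵥ x t) / (∑ i, x t i) = (ua ⬝ᵥ x 0) / (∑ i, x 0 i) := by
  intro t ht
  exact ⟨freq_const mhat μhat x hx_ne hode uA uA_Amap t ht,
         freq_const mhat μhat x hx_ne hode ua ua_Amap t ht⟩
end

section
/- (Conservation law leading to Hardy-Weinberg asymptotics) In the selectively neutral case with constant allele frequencies p_A, p_a, the quantities y₁ = x₁/p_A² − x₂/(2 p_A p_a) and y₂ = x₃/p_a² − x₂/(2 p_A p_a) each satisfy ẏ + μ̂(t) y = 0; consequently if ∫₀^∞ μ̂(t) dt = ∞ then y₁(t) → 0 and y₂(t) → 0 as t → ∞. -/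
open Matrix Filter Topology

lemma decay_aux (μ : ℝ → ℝ) (hμc : Continuous μ) (y : ℝ → ℝ)
    (hy : ∀ t, 0 ≤ t → HasDerivAt y (-μ t * y t) t)
    (hInt : Tendsto (fun T => ∫ t in (0:ℝ)..T, μ t) atTop atTop) :
    Tendsto y atTop (nhds 0) := by
  set M : ℝ → ℝ := fun u => ∫ s in (0:ℝ)..u, μ s with hMdef
  have hM : ∀ t : ℝ, HasDerivAt M (μ t) t := fun t =>
    (hμc.integral_hasStrictDerivAt 0 t).hasDerivAt
  set g : ℝ → ℝ := fun t => y t * Real.exp (M t) with hgdef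
  have hg : ∀ t, 0 ≤ t → HasDerivAt g 0 t := by
    intro t ht
    have := (hy t ht).mul ((hM t).exp)
    refine this.congr_deriv ?_
    ring
  have hconst : ∀ T, 0 ≤ T → g T = g 0 := by
    intro T hT
    have := constant_of_has_deriv_right_zero (f := g) (a := 0) (b := T)
      (fun s hs => (hg s hs.1).continuousAt.continuousWithinAt)
      (fun s hs => (hg s hs.1).hasDerivWithinAt)
    exact this T ⟨hT, le_refl T⟩
  have hyT : ∀ T, 0 ≤ T → y T = g 0 * Real.exp (-M T) := by
    intro T hT
    have h := hconst T hT
    simp only [hgdef] at h ⊢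
    rw [Real.exp_neg, ← h]
    field_simp
  have hexp : Tendsto (fun T => g 0 * Real.exp (-M T)) atTop (nhds 0) := by
    have h1 : Tendsto (fun T => -M T) atTop atBot := tendsto_neg_atTop_atBot.comp hInt
    have h2 : Tendsto (fun T => Real.exp (-M T)) atTop (nhds 0) :=
      Real.tendsto_exp_atBot.comp h1
    simpa using tendsto_const_nhds.mul h2
  refine hexp.congr' ?_
  filter_upwards [eventually_ge_atTop (0:ℝ)] with T hT
  exact (hyT T hT).symm

/-- Conservation law leading to Hardy–Weinberg asymptotics: in the selectively
    neutral case with constant positive allele frequencies p_A + p_a = 1, the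
    quantities y₁ = x₁/p_A² − x₂/(2p_Ap_a) and y₂ = x₃/p_a² − x₂/(2p_Ap_a)
    satisfy ẏ = −μ̂(t)y, and tend to 0 when ∫₀^∞ μ̂ = ∞. -/
theorem stmt_16
    (mhat μhat : ℝ → ℝ) (hmc : Continuous mhat) (hμc : Continuous μhat)
    (hμnn : ∀ t, 0 ≤ t → 0 ≤ μhat t)
    (pA pa : ℝ) (hpA : 0 < pA) (hpa : 0 < pa) (hsum : pA + pa = 1)
    (x : ℝ → Fin 3 → ℝ)
    (hx_nn : ∀ t, 0 ≤ t → ∀ i, 0 ≤ x t i)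
    (hx_ne : ∀ t, 0 ≤ t → 0 < ∑ i, x t i)
    (hfreqA : ∀ t, 0 ≤ t → uA ⬝ᵥ x t = pA * (∑ i, x t i))
    (hfreqa : ∀ t, 0 ≤ t → ua ⬝ᵥ x t = pa * (∑ i, x t i))
    (hode : ∀ t, 0 ≤ t → ∀ i,
      HasDerivAt (fun s => x s i) (mhat t * Amap (x t) i - μhat t * x t i) t) :
    (∀ t, 0 ≤ t →
      HasDerivAt (fun s => x s 0 / pA ^ 2 - x s 1 / (2 * pA * pa))
        (-μhat t * (x t 0 / pA ^ 2 - x t 1 / (2 * pA * pa))) t ∧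
      HasDerivAt (fun s => x s 2 / pa ^ 2 - x s 1 / (2 * pA * pa))
        (-μhat t * (x t 2 / pa ^ 2 - x t 1 / (2 * pA * pa))) t) ∧
    (Tendsto (fun T => ∫ t in (0:ℝ)..T, μhat t) atTop atTop →
      Tendsto (fun t => x t 0 / pA ^ 2 - x t 1 / (2 * pA * pa)) atTop (nhds 0) ∧
      Tendsto (fun t => x t 2 / pa ^ 2 - x t 1 / (2 * pA * pa)) atTop (nhds 0)) := by
  have hA : ∀ t, 0 ≤ t →
      Amap (x t) 0 = pA ^ 2 * (∑ i, x t i) ∧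
      Amap (x t) 1 = 2 * pA * pa * (∑ i, x t i) ∧
      Amap (x t) 2 = pa ^ 2 * (∑ i, x t i) := by
    intro t ht
    have hS := (hx_ne t ht).ne'
    refine ⟨?_, ?_, ?_⟩ <;>
      simp only [Amap, Matrix.cons_val_zero, Matrix.cons_val_one, Matrix.head_cons,
        Matrix.cons_val_two, Matrix.tail_cons, hfreqA t ht, hfreqa t ht] <;>
      field_simp <;> ring
  have hderiv : ∀ t, 0 ≤ t →
      HasDerivAt (fun s => x s 0 / pA ^ 2 - x s 1 / (2 * pA * pa))
        (-μhat t * (x t 0 / pA ^ 2 - x t 1 / (2 * pA * pa))) t ∧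
      HasDerivAt (fun s => x s 2 / pa ^ 2 - x s 1 / (2 * pA * pa))
        (-μhat t * (x t 2 / pa ^ 2 - x t 1 / (2 * pA * pa))) t := by
    intro t ht
    obtain ⟨hA0, hA1, hA2⟩ := hA t ht
    have h0 := hode t ht 0
    have h1 := hode t ht 1
    have h2 := hode t ht 2
    constructor
    · have := (h0.div_const (pA ^ 2)).sub (h1.div_const (2 * pA * pa))
      refine this.congr_deriv ?_
      rw [hA0, hA1]
      field_simp
      ring
    · have := (h2.div_const (pa ^ 2)).sub (h1.div_const (2 * pA * pa))
      refine this.congr_deriv ?_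
      rw [hA2, hA1]
      field_simp
      ring
  refine ⟨hderiv, fun hInt => ?_⟩
  constructor
  · exact decay_aux μhat hμc _ (fun t ht => (hderiv t ht).1) hInt
  · exact decay_aux μhat hμc _ (fun t ht => (hderiv t ht).2) hInt
end
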